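/- Let Y₁, ..., Y_N be Bernoulli (0/1-valued) random variables such that for every subset S ⊆ [N], P(∀ i ∈ S, Y_i = 1) ≤ p^{|S|} for some 0 < p < 1, and let Y = Y₁ + ... + Y_N. Then for every δ > 0, P(Y ≥ (1+δ) N p) ≤ exp(−δ²·N·p/(2+δ)). -/

import Mathlib

open MeasureTheory

lemma log_div_self_le_log' (x : ℝ) (hx : 0 ≤ x) : x / (1 + x) ≤ Real.log (1 + x) := by
  have hx0 : (0:ℝ) < 1 + x := by linarith
  have h := Real.log_le_sub_one_of_pos (inv_pos.mpr hx0)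
  rw [Real.log_inv] at h
  have h2 : 1 - (1 + x)⁻¹ ≤ Real.log (1 + x) := by linarith
  have heq : x / (1 + x) = 1 - (1 + x)⁻¹ := by field_simp; ring
  linarith [heq ▸ h2]

lemma log_lower' (d : ℝ) (hd : 0 ≤ d) : 2 * d / (2 + d) ≤ Real.log (1 + d) := by
  set g : ℝ → ℝ := fun x => (2 + x) * Real.log (1 + x) - 2 * x with hg
  have key : ∀ x ∈ Set.Ici (0:ℝ), HasDerivAt g (Real.log (1 + x) - x / (1 + x)) x := by
    intro x hx
    have hx0 : (0:ℝ) < 1 + x := by simp at hx; linarith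
    have h1 : HasDerivAt (fun x : ℝ => Real.log (1 + x)) (1 / (1 + x)) x := by
      have := (Real.hasDerivAt_log hx0.ne').comp x ((hasDerivAt_id x).const_add 1)
      simpa [Function.comp_def] using this
    have h2 : HasDerivAt (fun x : ℝ => (2 + x) * Real.log (1 + x))
        (1 * Real.log (1 + x) + (2 + x) * (1 / (1 + x))) x :=
      ((hasDerivAt_id x).const_add 2).mul h1
    have h3 := h2.sub ((hasDerivAt_id x).const_mul 2)
    refine h3.congr_deriv ?_
    field_simp
    ring
  have hmono : MonotoneOn g (Set.Ici (0:ℝ)) := by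
    apply monotoneOn_of_deriv_nonneg (convex_Ici 0)
    · exact fun x hx => ((key x hx).continuousAt).continuousWithinAt
    · intro x hx
      exact ((key x (interior_subset hx)).differentiableAt).differentiableWithinAt
    · intro x hx
      rw [(key x (interior_subset hx)).deriv]
      have hx0 : (0:ℝ) < x := by simpa using hx
      linarith [log_div_self_le_log' x hx0.le]
  have h0 := hmono Set.self_mem_Ici (Set.mem_Ici.mpr hd) hd
  have hz : g 0 = 0 := by norm_num [hg]
  rw [hz] at h0
  simp only [hg] at h0
  rw [div_le_iff₀ (by linarith)]
  nlinarith [h0]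

theorem stmt_8 {Ω : Type*} [MeasurableSpace Ω] (μ : Measure Ω) [IsProbabilityMeasure μ]
    (N : ℕ) (Y : Fin N → Ω → ℝ) (hmeas : ∀ i, Measurable (Y i))
    (h01 : ∀ i ω, Y i ω = 0 ∨ Y i ω = 1)
    (p : ℝ) (hp0 : 0 < p) (hp1 : p < 1)
    (hcorr : ∀ S : Finset (Fin N),
      μ {ω | ∀ i ∈ S, Y i ω = 1} ≤ ENNReal.ofReal (p ^ S.card)) :
    ∀ δ : ℝ, 0 < δ →
      μ {ω | (1 + δ) * N * p ≤ ∑ i, Y i ω}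
        ≤ ENNReal.ofReal (Real.exp (-(δ ^ 2 * N * p) / (2 + δ))) := by
  intro δ hδ
  set a : ℝ := (1 + δ) * N * p with ha
  set f : Ω → ℝ := fun ω => ∏ i, (1 + δ * Y i ω) with hf
  -- the events
  set A : Finset (Fin N) → Set Ω := fun S => {ω | ∀ i ∈ S, Y i ω = 1} with hA
  have hAmeas : ∀ S, MeasurableSet (A S) := by
    intro S
    have : A S = ⋂ i ∈ S, (Y i) ⁻¹' {1} := by
      ext ω; simp [hA, Set.mem_iInter]
    rw [this]
    exact MeasurableSet.biInter S.countable_toSet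
      fun i _ => (hmeas i) (measurableSet_singleton 1)
  -- the S-indexed products are indicators
  have hind : ∀ S : Finset (Fin N), (fun ω => ∏ i ∈ S, Y i ω) = (A S).indicator 1 := by
    intro S
    funext ω
    by_cases h : ∀ i ∈ S, Y i ω = 1
    · rw [Set.indicator_of_mem (show ω ∈ A S from h)]
      simp [Finset.prod_eq_one h]
    · rw [Set.indicator_of_notMem (show ω ∉ A S from h)]
      push_neg at h
      obtain ⟨i, hiS, hi⟩ := h
      have : Y i ω = 0 := (h01 i ω).resolve_right hi
      exact Finset.prod_eq_zero hiS this
  have hintS : ∀ S : Finset (Fin N), Integrable (fun ω => ∏ i ∈ S, Y i ω) μ := by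
    intro S
    rw [hind S]
    exact (integrable_const (1:ℝ)).indicator (hAmeas S)
  have hintegralS : ∀ S : Finset (Fin N),
      ∫ ω, ∏ i ∈ S, Y i ω ∂μ = (μ (A S)).toReal := by
    intro S
    rw [hind S]
    exact integral_indicator_one (hAmeas S)
  -- expansion of f
  have hexpand : ∀ ω, f ω = ∑ S ∈ (Finset.univ : Finset (Fin N)).powerset,
      δ ^ S.card * ∏ i ∈ S, Y i ω := by
    intro ω
    simp only [hf]
    have : ∀ i, (1 : ℝ) + δ * Y i ω = δ * Y i ω + 1 := fun i => by ring
    simp_rw [this]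
    rw [Finset.prod_add]
    congr 1
    funext S
    rw [Finset.prod_const_one, mul_one, Finset.prod_mul_distrib, Finset.prod_const]
  have hfint : Integrable f μ := by
    have : f = fun ω => ∑ S ∈ (Finset.univ : Finset (Fin N)).powerset,
        δ ^ S.card * ∏ i ∈ S, Y i ω := funext hexpand
    rw [this]
    exact integrable_finset_sum _ fun S _ => (hintS S).const_mul _
  -- bound on the integral of f
  have hbound : ∫ ω, f ω ∂μ ≤ Real.exp (N * δ * p) := by
    have h1 : ∫ ω, f ω ∂μ = ∑ S ∈ (Finset.univ : Finset (Fin N)).powerset,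
        δ ^ S.card * (μ (A S)).toReal := by
      simp_rw [funext hexpand]
      rw [integral_finset_sum _ fun S _ => (hintS S).const_mul _]
      congr 1
      funext S
      rw [integral_const_mul, hintegralS S]
    rw [h1]
    have h2 : ∑ S ∈ (Finset.univ : Finset (Fin N)).powerset,
        δ ^ S.card * (μ (A S)).toReal
        ≤ ∑ S ∈ (Finset.univ : Finset (Fin N)).powerset, (δ * p) ^ S.card := by
      apply Finset.sum_le_sum
      intro S _
      have hμS : (μ (A S)).toReal ≤ p ^ S.card :=
        ENNReal.toReal_le_of_le_ofReal (pow_nonneg hp0.le _) (hcorr S)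
      rw [mul_pow]
      exact mul_le_mul_of_nonneg_left hμS (pow_nonneg hδ.le _)
    have h3 : ∑ S ∈ (Finset.univ : Finset (Fin N)).powerset, (δ * p) ^ S.card
        = (1 + δ * p) ^ N := by
      have := Finset.prod_add (fun _ : Fin N => δ * p) (fun _ => (1:ℝ)) Finset.univ
      simp only [Finset.prod_const, Finset.prod_const_one, mul_one, one_pow,
        Finset.card_univ, Fintype.card_fin] at this
      rw [← this]
      ring
    have h4 : (1 + δ * p) ^ N ≤ Real.exp (N * δ * p) := by
      have h5 : (1:ℝ) + δ * p ≤ Real.exp (δ * p) := by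
        have := Real.add_one_le_exp (δ * p)
        linarith
      calc (1 + δ * p) ^ N ≤ Real.exp (δ * p) ^ N :=
            pow_le_pow_left₀ (by positivity) h5 N
        _ = Real.exp (N * δ * p) := by
            rw [← Real.exp_nat_mul]; ring_nf
    linarith
  -- f ω = exp(c * ∑ Y i ω) with c = log(1+δ)
  set c : ℝ := Real.log (1 + δ) with hc
  have hc0 : 0 ≤ c := Real.log_nonneg (by linarith)
  have hfexp : ∀ ω, f ω = Real.exp (c * ∑ i, Y i ω) := by
    intro ω
    show ∏ i, (1 + δ * Y i ω) = _
    rw [Finset.mul_sum, Real.exp_sum]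
    refine Finset.prod_congr rfl fun i _ => ?_
    rcases h01 i ω with h | h
    · simp [h]
    · rw [h, mul_one, mul_one, hc, Real.exp_log (by linarith)]
  -- Markov
  have hmarkov := mul_meas_ge_le_integral_of_nonneg
    (Filter.Eventually.of_forall fun ω => by
      rw [hfexp ω]; exact (Real.exp_pos _).le) hfint (Real.exp (c * a))
  have hsub : {ω | a ≤ ∑ i, Y i ω} ⊆ {ω | Real.exp (c * a) ≤ f ω} := by
    intro ω hω
    simp only [Set.mem_setOf_eq] at hω ⊢
    rw [hfexp ω]
    exact Real.exp_le_exp.mpr (mul_le_mul_of_nonneg_left hω hc0)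
  have hmeasE : (μ {ω | a ≤ ∑ i, Y i ω}).toReal
      ≤ Real.exp (N * δ * p - c * a) := by
    have hμle : (μ {ω | a ≤ ∑ i, Y i ω}).toReal
        ≤ (μ {ω | Real.exp (c * a) ≤ f ω}).toReal := by
      apply ENNReal.toReal_mono (measure_ne_top μ _)
      exact measure_mono hsub
    have : Real.exp (c * a) * (μ {ω | Real.exp (c * a) ≤ f ω}).toReal
        ≤ Real.exp (N * δ * p) := le_trans hmarkov hbound
    rw [Real.exp_sub]
    rw [le_div_iff₀ (Real.exp_pos _)]
    calc (μ {ω | a ≤ ∑ i, Y i ω}).toReal * Real.exp (c * a)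
        ≤ (μ {ω | Real.exp (c * a) ≤ f ω}).toReal * Real.exp (c * a) := by
          exact mul_le_mul_of_nonneg_right hμle (Real.exp_pos _).le
      _ ≤ Real.exp (N * δ * p) := by linarith [this]
  -- exponent comparison
  have hexpo : N * δ * p - c * a ≤ -(δ ^ 2 * N * p) / (2 + δ) := by
    have hlog := log_lower' δ hδ.le
    have hNp : (0:ℝ) ≤ (N:ℝ) * p := by positivity
    have hca : (1 + δ) * ((N:ℝ) * p) * (2 * δ / (2 + δ)) ≤ c * a := by
      rw [ha, hc]
      have := mul_le_mul_of_nonneg_left hlog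
        (show (0:ℝ) ≤ (1 + δ) * ((N:ℝ) * p) by positivity)
      calc (1 + δ) * ((N:ℝ) * p) * (2 * δ / (2 + δ))
          ≤ (1 + δ) * ((N:ℝ) * p) * Real.log (1 + δ) := this
        _ = Real.log (1 + δ) * ((1 + δ) * ↑N * p) := by ring
    have key : (N:ℝ) * δ * p - (1 + δ) * ((N:ℝ) * p) * (2 * δ / (2 + δ))
        = -(δ ^ 2 * N * p) / (2 + δ) := by
      field_simp
      ring
    linarith [hca, key]
  -- conclude
  calc μ {ω | a ≤ ∑ i, Y i ω}
      = ENNReal.ofReal (μ {ω | a ≤ ∑ i, Y i ω}).toReal := by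
        rw [ENNReal.ofReal_toReal (measure_ne_top μ _)]
    _ ≤ ENNReal.ofReal (Real.exp (-(δ ^ 2 * N * p) / (2 + δ))) := by
        apply ENNReal.ofReal_le_ofReal
        exact le_trans hmeasE (Real.exp_le_exp.mpr hexpo)
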